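/- Let α : ℝ³ × ℝ³ → ℂ be measurable and such that for almost every y ∈ ℝ³ the function x ↦ α(x, y) is an H¹ function. Then ∬ |V(x − y)|² |α(x, y)|² dx dy ≤ C² (∬ |α(x, y)|² dx dy + ∬ ‖∇ₓα(x, y)‖² dx dy). (This is the Hilbert–Schmidt bound ‖Π_V(α)‖_{S₂} ≤ C ‖α‖_{H¹} for the operator Π_V(α) with integral kernel V(x − y) α(x, y).) -/

import Mathlib

open MeasureTheory
open scoped ENNReal

/-- A function `f : ℝ³ → ℂ` is an `H¹` function: it is differentiable, square-integrable,
and its (Fréchet) derivative is square-integrable (in operator norm). -/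
def IsH1 (f : EuclideanSpace ℝ (Fin 3) → ℂ) : Prop :=
  Differentiable ℝ f ∧
    (∫⁻ x, (‖f x‖₊ : ℝ≥0∞) ^ 2) < ⊤ ∧
    (∫⁻ x, (‖fderiv ℝ f x‖₊ : ℝ≥0∞) ^ 2) < ⊤

lemma stmt14_aux (V : EuclideanSpace ℝ (Fin 3) → ℝ) (C : ℝ)
    (hbound : ∀ f : EuclideanSpace ℝ (Fin 3) → ℂ, IsH1 f →
      (∫⁻ x, (‖V x • f x‖₊ : ℝ≥0∞) ^ 2) ≤
        (ENNReal.ofReal C) ^ 2 *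
          ((∫⁻ x, (‖f x‖₊ : ℝ≥0∞) ^ 2) + ∫⁻ x, (‖fderiv ℝ f x‖₊ : ℝ≥0∞) ^ 2))
    (f : EuclideanSpace ℝ (Fin 3) → ℂ) (hf : IsH1 f) (y : EuclideanSpace ℝ (Fin 3)) :
    (∫⁻ x, (‖V (x - y) • f x‖₊ : ℝ≥0∞) ^ 2) ≤
      (ENNReal.ofReal C) ^ 2 *
        ((∫⁻ x, (‖f x‖₊ : ℝ≥0∞) ^ 2) + ∫⁻ x, (‖fderiv ℝ f x‖₊ : ℝ≥0∞) ^ 2) := by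
  have hgd : ∀ x : EuclideanSpace ℝ (Fin 3),
      HasFDerivAt (fun x => f (x + y)) (fderiv ℝ f (x + y)) x := by
    intro x
    have h1 := ((hf.1 (x + y)).hasFDerivAt).comp x ((hasFDerivAt_id x).add_const y)
    simpa [Function.comp_def] using h1
  have hfd : ∀ x, fderiv ℝ (fun x => f (x + y)) x = fderiv ℝ f (x + y) :=
    fun x => (hgd x).fderiv
  have hB' : (∫⁻ x, (‖fderiv ℝ (fun x => f (x + y)) x‖₊ : ℝ≥0∞) ^ 2)
      = ∫⁻ x, (‖fderiv ℝ f x‖₊ : ℝ≥0∞) ^ 2 := by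
    rw [lintegral_congr fun x => by rw [hfd x],
      lintegral_add_right_eq_self (fun x => (‖fderiv ℝ f x‖₊ : ℝ≥0∞) ^ 2) y]
  have hA' : (∫⁻ x, (‖f (x + y)‖₊ : ℝ≥0∞) ^ 2) = ∫⁻ x, (‖f x‖₊ : ℝ≥0∞) ^ 2 :=
    lintegral_add_right_eq_self (fun x => (‖f x‖₊ : ℝ≥0∞) ^ 2) y
  have hg : IsH1 (fun x => f (x + y)) := by
    refine ⟨fun x => (hgd x).differentiableAt, ?_, ?_⟩
    · rw [hA']; exact hf.2.1
    · rw [hB']; exact hf.2.2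
  have e1 : (∫⁻ x, (‖V (x - y) • f x‖₊ : ℝ≥0∞) ^ 2)
      = ∫⁻ x, (‖V x • f (x + y)‖₊ : ℝ≥0∞) ^ 2 := by
    rw [← lintegral_sub_right_eq_self (fun x => (‖V x • f (x + y)‖₊ : ℝ≥0∞) ^ 2) y]
    exact lintegral_congr fun x => by rw [sub_add_cancel]
  rw [e1]
  calc (∫⁻ x, (‖V x • f (x + y)‖₊ : ℝ≥0∞) ^ 2)
      ≤ (ENNReal.ofReal C) ^ 2 * ((∫⁻ x, (‖f (x + y)‖₊ : ℝ≥0∞) ^ 2)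
          + ∫⁻ x, (‖fderiv ℝ (fun x => f (x + y)) x‖₊ : ℝ≥0∞) ^ 2) := hbound _ hg
    _ = (ENNReal.ofReal C) ^ 2 * ((∫⁻ x, (‖f x‖₊ : ℝ≥0∞) ^ 2)
          + ∫⁻ x, (‖fderiv ℝ f x‖₊ : ℝ≥0∞) ^ 2) := by rw [hA', hB']

/-- Assume the form bound `V² ≤ C²(1 − Δ)`.  Let `α : ℝ³ × ℝ³ → ℂ` be
measurable and such that for a.e. `y` the function `x ↦ α(x, y)` is `H¹`.  Then
`∬ |V(x − y)|² |α(x, y)|² dx dy ≤ C² (∬ |α|² + ∬ ‖∇ₓα‖²)`, i.e. the Hilbert–Schmidt bound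
`‖Π_V(α)‖_{S₂} ≤ C ‖α‖_{H¹}`. -/
theorem stmt14 (V : EuclideanSpace ℝ (Fin 3) → ℝ) (hV : Measurable V)
    (C : ℝ) (hC : 0 ≤ C)
    (hbound : ∀ f : EuclideanSpace ℝ (Fin 3) → ℂ, IsH1 f →
      (∫⁻ x, (‖V x • f x‖₊ : ℝ≥0∞) ^ 2) ≤
        (ENNReal.ofReal C) ^ 2 *
          ((∫⁻ x, (‖f x‖₊ : ℝ≥0∞) ^ 2) + ∫⁻ x, (‖fderiv ℝ f x‖₊ : ℝ≥0∞) ^ 2))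
    (α : EuclideanSpace ℝ (Fin 3) × EuclideanSpace ℝ (Fin 3) → ℂ) (hα : Measurable α)
    (hαH1 : ∀ᵐ y : EuclideanSpace ℝ (Fin 3), IsH1 fun x => α (x, y)) :
    (∫⁻ y, ∫⁻ x, (‖V (x - y) • α (x, y)‖₊ : ℝ≥0∞) ^ 2) ≤
      (ENNReal.ofReal C) ^ 2 *
        ((∫⁻ y, ∫⁻ x, (‖α (x, y)‖₊ : ℝ≥0∞) ^ 2) +
          ∫⁻ y, ∫⁻ x, (‖fderiv ℝ (fun x => α (x, y)) x‖₊ : ℝ≥0∞) ^ 2) := by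
  have key : ∀ᵐ y : EuclideanSpace ℝ (Fin 3),
      (∫⁻ x, (‖V (x - y) • α (x, y)‖₊ : ℝ≥0∞) ^ 2) ≤
      (ENNReal.ofReal C) ^ 2 *
        ((∫⁻ x, (‖α (x, y)‖₊ : ℝ≥0∞) ^ 2) +
          ∫⁻ x, (‖fderiv ℝ (fun x => α (x, y)) x‖₊ : ℝ≥0∞) ^ 2) := by
    filter_upwards [hαH1] with y hy
    exact stmt14_aux V C hbound _ hy y
  have hAmeas : Measurable fun y => ∫⁻ x, (‖α (x, y)‖₊ : ℝ≥0∞) ^ 2 := by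
    have : Measurable fun p : EuclideanSpace ℝ (Fin 3) × EuclideanSpace ℝ (Fin 3) =>
        (‖α p‖₊ : ℝ≥0∞) ^ 2 := (hα.nnnorm.coe_nnreal_ennreal).pow_const 2
    exact this.lintegral_prod_left'
  calc (∫⁻ y, ∫⁻ x, (‖V (x - y) • α (x, y)‖₊ : ℝ≥0∞) ^ 2)
      ≤ ∫⁻ y, (ENNReal.ofReal C) ^ 2 *
          ((∫⁻ x, (‖α (x, y)‖₊ : ℝ≥0∞) ^ 2) +
            ∫⁻ x, (‖fderiv ℝ (fun x => α (x, y)) x‖₊ : ℝ≥0∞) ^ 2) :=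
        lintegral_mono_ae key
    _ = (ENNReal.ofReal C) ^ 2 * ∫⁻ y,
          ((∫⁻ x, (‖α (x, y)‖₊ : ℝ≥0∞) ^ 2) +
            ∫⁻ x, (‖fderiv ℝ (fun x => α (x, y)) x‖₊ : ℝ≥0∞) ^ 2) :=
        lintegral_const_mul' _ _ (ENNReal.pow_ne_top ENNReal.ofReal_ne_top)
    _ = (ENNReal.ofReal C) ^ 2 *
          ((∫⁻ y, ∫⁻ x, (‖α (x, y)‖₊ : ℝ≥0∞) ^ 2) +
            ∫⁻ y, ∫⁻ x, (‖fderiv ℝ (fun x => α (x, y)) x‖₊ : ℝ≥0∞) ^ 2) := by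
        rw [lintegral_add_left' hAmeas.aemeasurable]
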